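/- With L ≥ 3 lists, if there exist two list indices i ≠ j such that the inclusion indicators W_i and W_j are conditionally independent given the remaining indicators (W_k)_{k ≠ i,j}, and all cell probabilities p_x = P(W = x) are strictly positive, then the full-way interaction term γ = Σ_{x ∈ {0,1}^L} (−1)^{|x|+1} log p_x equals zero; i.e., assumption A3.1 of no full-way interaction is satisfied. -/

import Mathlib

open MeasureTheory

/-- A list inclusion pattern on `L` lists. -/
abbrev Pattern (L : ℕ) := Fin L → Bool

/-- `|x|`, the number of lists on which the pattern `x` appears. -/
def weight {L : ℕ} (x : Pattern L) : ℕ := (Finset.univ.filter fun i => x i = true).card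

/-- The full-way interaction term `γ = ∑_{x ∈ {0,1}^L} (-1)^{|x|+1} log p_x`. -/
noncomputable def fullInteraction {L : ℕ} (p : Pattern L → ℝ) : ℝ :=
  ∑ x : Pattern L, (-1 : ℝ) ^ (weight x + 1) * Real.log (p x)

/-- With `L ≥ 3` lists, if there exist two list indices `i ≠ j` such that the
inclusion indicators `W_i` and `W_j` are conditionally independent given the remaining
indicators `(W_k)_{k ≠ i,j}`, i.e.
`P(W_i = a, W_j = b | (W_k)_{k≠i,j} = w) = P(W_i = a | rest = w) · P(W_j = b | rest = w)`
for all `a, b` and all `w`, and all cell probabilities `p_x = P(W = x)` are strictly positive,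
then the full-way interaction term `γ = ∑_{x ∈ {0,1}^L} (-1)^{|x|+1} log p_x` equals zero;
i.e. assumption A3.1 of no full-way interaction is satisfied. -/

def updP {L : ℕ} (i j : Fin L) (a b : Bool) (x : Pattern L) : Pattern L :=
  Function.update (Function.update x i a) j b

variable {L : ℕ} {i j : Fin L}

lemma updP_i (hij : i ≠ j) (a b : Bool) (x : Pattern L) : updP i j a b x i = a := by
  simp [updP, Function.update_apply, hij]

lemma updP_j (a b : Bool) (x : Pattern L) : updP i j a b x j = b := by
  simp [updP]

lemma updP_other (a b : Bool) (x : Pattern L) (k : Fin L) (hki : k ≠ i) (hkj : k ≠ j) :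
    updP i j a b x k = x k := by
  simp [updP, Function.update_apply, hki, hkj]

lemma eq_updP_iff (hij : i ≠ j) (a b : Bool) (x y : Pattern L) :
    y = updP i j a b x ↔ (y i = a ∧ y j = b ∧ ∀ k, k ≠ i → k ≠ j → y k = x k) := by
  constructor
  · rintro rfl
    exact ⟨updP_i hij a b x, updP_j a b x, fun k hki hkj => updP_other a b x k hki hkj⟩
  · rintro ⟨h1, h2, h3⟩
    funext k
    by_cases hki : k = i
    · subst hki; rw [h1, updP_i hij]
    · by_cases hkj : k = j
      · subst hkj; rw [h2, updP_j]
      · rw [h3 k hki hkj, updP_other a b x k hki hkj]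

lemma weight_update (x : Pattern L) (k : Fin L) (a : Bool) (hx : x k = false) :
    weight (Function.update x k a) = weight x + a.toNat := by
  cases a with
  | false =>
    simp only [Bool.toNat_false, Nat.add_zero, weight]
    congr 1
    apply Finset.filter_congr
    intro m _
    by_cases hmk : m = k
    · subst hmk; simp [Function.update_apply, hx]
    · simp [Function.update_apply, hmk]
  | true =>
    have : (Finset.univ.filter fun m => Function.update x k true m = true)
        = insert k (Finset.univ.filter fun m => x m = true) := by
      ext m
      by_cases hmk : m = k
      · subst hmk; simp [Function.update_apply]
      · simp [Function.update_apply, hmk]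
    rw [weight, this, Finset.card_insert_of_notMem (by simp [hx])]; rfl

lemma weight_updP (hij : i ≠ j) (a b : Bool) (x : Pattern L) (hxi : x i = false)
    (hxj : x j = false) :
    weight (updP i j a b x) = weight x + a.toNat + b.toNat := by
  have h1 : Function.update x i a j = false := by
    rw [Function.update_apply, if_neg (Ne.symm hij)]; exact hxj
  rw [updP, weight_update _ j b h1, weight_update x i a hxi]

lemma updP_updP (hij : i ≠ j) (a b a' b' : Bool) (x : Pattern L) :
    updP i j a' b' (updP i j a b x) = updP i j a' b' x := by
  funext k
  by_cases hki : k = i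
  · subst hki; rw [updP_i hij, updP_i hij]
  · by_cases hkj : k = j
    · subst hkj; rw [updP_j, updP_j]
    · rw [updP_other, updP_other, updP_other] <;> assumption

lemma updP_self (hij : i ≠ j) (x : Pattern L) : updP i j (x i) (x j) x = x := by
  funext k
  by_cases hki : k = i
  · subst hki; rw [updP_i hij]
  · by_cases hkj : k = j
    · subst hkj; rw [updP_j]
    · rw [updP_other _ _ _ _ hki hkj]

theorem conditionally_independent_lists_no_full_interaction
    {L : ℕ} (hL : 3 ≤ L)
    {Ω : Type*} [MeasurableSpace Ω] (μ : Measure Ω) [IsProbabilityMeasure μ]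
    (W : Ω → Pattern L) (hm : Measurable W)
    (i j : Fin L) (hij : i ≠ j)
    (p : Pattern L → ℝ)
    (hpdef : ∀ x : Pattern L, p x = (μ {ω | W ω = x}).toReal)
    (hpos : ∀ x, 0 < p x)
    (hci : ∀ (x : Pattern L) (a b : Bool),
      (μ {ω | W ω i = a ∧ W ω j = b ∧ ∀ k, k ≠ i → k ≠ j → W ω k = x k}).toReal /
          (μ {ω | ∀ k, k ≠ i → k ≠ j → W ω k = x k}).toReal =
        ((μ {ω | W ω i = a ∧ ∀ k, k ≠ i → k ≠ j → W ω k = x k}).toReal /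
            (μ {ω | ∀ k, k ≠ i → k ≠ j → W ω k = x k}).toReal) *
          ((μ {ω | W ω j = b ∧ ∀ k, k ≠ i → k ≠ j → W ω k = x k}).toReal /
            (μ {ω | ∀ k, k ≠ i → k ≠ j → W ω k = x k}).toReal)) :
    fullInteraction p = 0 := by
  classical
  have hMeas : ∀ y : Pattern L, MeasurableSet {ω | W ω = y} :=
    fun y => hm (measurableSet_singleton y)
  have hdisj : ∀ y z : Pattern L, y ≠ z → Disjoint {ω | W ω = y} {ω | W ω = z} := by
    intro y z hyz
    rw [Set.disjoint_left]
    rintro ω h1 h2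
    exact hyz (h1.symm.trans h2)
  have hadd : ∀ y z : Pattern L, y ≠ z →
      (μ ({ω | W ω = y} ∪ {ω | W ω = z})).toReal
        = (μ {ω | W ω = y}).toReal + (μ {ω | W ω = z}).toReal := by
    intro y z hyz
    rw [measure_union (hdisj y z hyz) (hMeas z),
      ENNReal.toReal_add (measure_ne_top μ _) (measure_ne_top μ _)]
  -- the key log identity
  have key : ∀ x : Pattern L,
      Real.log (p (updP i j true true x)) + Real.log (p (updP i j false false x))
        = Real.log (p (updP i j true false x)) + Real.log (p (updP i j false true x)) := by
    intro x
    have hne : ∀ a b a' b' : Bool, (a ≠ a' ∨ b ≠ b') →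
        updP i j a b x ≠ updP i j a' b' x := by
      intro a b a' b' h heq
      rcases h with h | h
      · exact h (by rw [← updP_i hij a b x, heq, updP_i hij])
      · exact h (by rw [← updP_j a b x, heq, updP_j])
    have hN : ∀ a b : Bool,
        {ω | W ω i = a ∧ W ω j = b ∧ ∀ k, k ≠ i → k ≠ j → W ω k = x k}
          = {ω | W ω = updP i j a b x} :=
      fun a b => Set.ext fun ω => (eq_updP_iff hij a b x (W ω)).symm
    have hRow : ∀ a : Bool,
        {ω | W ω i = a ∧ ∀ k, k ≠ i → k ≠ j → W ω k = x k}
          = {ω | W ω = updP i j a false x} ∪ {ω | W ω = updP i j a true x} := by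
      intro a
      ext ω
      simp only [Set.mem_setOf_eq, Set.mem_union]
      constructor
      · rintro ⟨hi, hrest⟩
        cases hb : W ω j with
        | false => exact Or.inl ((eq_updP_iff hij a false x (W ω)).mpr ⟨hi, hb, hrest⟩)
        | true => exact Or.inr ((eq_updP_iff hij a true x (W ω)).mpr ⟨hi, hb, hrest⟩)
      · rintro (h | h) <;>
          (rw [eq_updP_iff hij _ _ x (W ω)] at h; exact ⟨h.1, h.2.2⟩)
    have hCol : ∀ b : Bool,
        {ω | W ω j = b ∧ ∀ k, k ≠ i → k ≠ j → W ω k = x k}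
          = {ω | W ω = updP i j false b x} ∪ {ω | W ω = updP i j true b x} := by
      intro b
      ext ω
      simp only [Set.mem_setOf_eq, Set.mem_union]
      constructor
      · rintro ⟨hj, hrest⟩
        cases ha : W ω i with
        | false => exact Or.inl ((eq_updP_iff hij false b x (W ω)).mpr ⟨ha, hj, hrest⟩)
        | true => exact Or.inr ((eq_updP_iff hij true b x (W ω)).mpr ⟨ha, hj, hrest⟩)
      · rintro (h | h) <;>
          (rw [eq_updP_iff hij _ _ x (W ω)] at h; exact ⟨h.2.1, h.2.2⟩)
    have hAll :
        {ω | ∀ k, k ≠ i → k ≠ j → W ω k = x k}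
          = ({ω | W ω = updP i j false false x} ∪ {ω | W ω = updP i j false true x})
            ∪ ({ω | W ω = updP i j true false x} ∪ {ω | W ω = updP i j true true x}) := by
      ext ω
      simp only [Set.mem_setOf_eq, Set.mem_union]
      constructor
      · intro hrest
        cases ha : W ω i with
        | false =>
          cases hb : W ω j with
          | false => exact Or.inl (Or.inl ((eq_updP_iff hij _ _ x (W ω)).mpr ⟨ha, hb, hrest⟩))
          | true => exact Or.inl (Or.inr ((eq_updP_iff hij _ _ x (W ω)).mpr ⟨ha, hb, hrest⟩))
        | true =>
          cases hb : W ω j with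
          | false => exact Or.inr (Or.inl ((eq_updP_iff hij _ _ x (W ω)).mpr ⟨ha, hb, hrest⟩))
          | true => exact Or.inr (Or.inr ((eq_updP_iff hij _ _ x (W ω)).mpr ⟨ha, hb, hrest⟩))
      · rintro ((h | h) | (h | h)) <;>
          (rw [eq_updP_iff hij _ _ x (W ω)] at h; exact h.2.2)
    set q : Bool → Bool → ℝ := fun a b => p (updP i j a b x) with hqdef
    have hqpos : ∀ a b, 0 < q a b := fun a b => hpos _
    have hq : ∀ a b : Bool,
        (μ {ω | W ω i = a ∧ W ω j = b ∧ ∀ k, k ≠ i → k ≠ j → W ω k = x k}).toReal = q a b := by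
      intro a b; rw [hN a b, ← hpdef]
    have hr : ∀ a : Bool,
        (μ {ω | W ω i = a ∧ ∀ k, k ≠ i → k ≠ j → W ω k = x k}).toReal
          = q a false + q a true := by
      intro a
      rw [hRow a, hadd _ _ (hne a false a true (Or.inr (by simp))), ← hpdef, ← hpdef]
    have hc : ∀ b : Bool,
        (μ {ω | W ω j = b ∧ ∀ k, k ≠ i → k ≠ j → W ω k = x k}).toReal
          = q false b + q true b := by
      intro b
      rw [hCol b, hadd _ _ (hne false b true b (Or.inl (by simp))), ← hpdef, ← hpdef]
    have hs : (μ {ω | ∀ k, k ≠ i → k ≠ j → W ω k = x k}).toReal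
        = q false false + q false true + (q true false + q true true) := by
      have d1 : Disjoint
          ({ω | W ω = updP i j false false x} ∪ {ω | W ω = updP i j false true x})
          ({ω | W ω = updP i j true false x} ∪ {ω | W ω = updP i j true true x}) := by
        refine Disjoint.union_left ?_ ?_ <;> refine Disjoint.union_right ?_ ?_ <;>
          exact hdisj _ _ (hne _ _ _ _ (Or.inl (by simp)))
      rw [hAll, measure_union d1 ((hMeas _).union (hMeas _)),
        ENNReal.toReal_add (measure_ne_top μ _) (measure_ne_top μ _),
        hadd _ _ (hne false false false true (Or.inr (by simp))),
        hadd _ _ (hne true false true true (Or.inr (by simp))), ← hpdef, ← hpdef, ← hpdef,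
        ← hpdef]
    have hS : (0:ℝ) < q false false + q false true + (q true false + q true true) := by
      have := hqpos false false; have := hqpos false true
      have := hqpos true false; have := hqpos true true
      linarith
    have e : ∀ a b : Bool,
        q a b * (q false false + q false true + (q true false + q true true))
          = (q a false + q a true) * (q false b + q true b) := by
      intro a b
      have h := hci x a b
      rw [hq a b, hr a, hc b, hs] at h
      have hS0 : q false false + q false true + (q true false + q true true) ≠ 0 := ne_of_gt hS
      field_simp at h
      apply mul_right_cancel₀ hS0
      linear_combination (q false false + q false true + (q true false + q true true)) * h
    have hprod : q true true * q false false = q true false * q false true := by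
      have hS2 : (q false false + q false true + (q true false + q true true))
          * (q false false + q false true + (q true false + q true true)) ≠ 0 :=
        mul_ne_zero (ne_of_gt hS) (ne_of_gt hS)
      apply mul_right_cancel₀ hS2
      calc q true true * q false false
            * ((q false false + q false true + (q true false + q true true))
              * (q false false + q false true + (q true false + q true true)))
          = (q true true * (q false false + q false true + (q true false + q true true)))
            * (q false false * (q false false + q false true + (q true false + q true true))) := by
            ring
        _ = (q true false * (q false false + q false true + (q true false + q true true)))
            * (q false true * (q false false + q false true + (q true false + q true true))) := by
            rw [e true true, e false false, e true false, e false true]; ring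
        _ = q true false * q false true
            * ((q false false + q false true + (q true false + q true true))
              * (q false false + q false true + (q true false + q true true))) := by
            ring
    have := Real.log_mul (ne_of_gt (hqpos true true)) (ne_of_gt (hqpos false false))
    have h2 := Real.log_mul (ne_of_gt (hqpos true false)) (ne_of_gt (hqpos false true))
    calc Real.log (q true true) + Real.log (q false false)
        = Real.log (q true true * q false false) := by rw [this]
      _ = Real.log (q true false * q false true) := by rw [hprod]
      _ = Real.log (q true false) + Real.log (q false true) := by rw [h2]
  -- now the combinatorial part
  have hsplit : fullInteraction p
      = ∑ z ∈ ((Finset.univ : Finset (Bool × Bool)) ×ˢ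
          (Finset.univ.filter fun x : Pattern L => x i = false ∧ x j = false)),
          (-1:ℝ) ^ (weight (updP i j z.1.1 z.1.2 z.2) + 1)
            * Real.log (p (updP i j z.1.1 z.1.2 z.2)) := by
    refine Finset.sum_nbij' (fun x => ((x i, x j), updP i j false false x))
      (fun z => updP i j z.1.1 z.1.2 z.2) ?_ ?_ ?_ ?_ ?_
    · intro x _
      simp [Finset.mem_product, updP_i hij, updP_j]
    · intro z _
      exact Finset.mem_univ _
    · intro x _
      simp only
      rw [updP_updP hij, updP_self hij]
    · intro z hz
      simp only [Finset.mem_product, Finset.mem_filter] at hz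
      obtain ⟨-, -, hzi, hzj⟩ := hz
      ext
      · simp [updP_i hij]
      · simp [updP_j]
      · simp only [updP_updP hij]
        conv_rhs => rw [← updP_self hij z.2]
        rw [hzi, hzj]
    · intro x _
      simp only
      rw [updP_updP hij, updP_self hij]
  rw [hsplit, Finset.sum_product_right]
  apply Finset.sum_eq_zero
  intro x hx
  simp only [Finset.mem_filter] at hx
  obtain ⟨-, hxi, hxj⟩ := hx
  rw [Fintype.sum_prod_type]
  simp only [Fintype.sum_bool]
  rw [weight_updP hij true true x hxi hxj, weight_updP hij true false x hxi hxj,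
    weight_updP hij false true x hxi hxj, weight_updP hij false false x hxi hxj]
  simp only [Bool.toNat_true, Bool.toNat_false, Nat.add_zero]
  have hk := key x
  simp only [pow_succ]
  linear_combination (-(-1:ℝ) ^ (weight x)) * hk
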